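/- Let F be a stack on K and W an F-sequence from ∅ to K. Then there exists a flooding sequence on F that is equivalent to W, i.e., has the same gradient vector field (same set of regular pairs). -/

import Mathlib

open Finset

abbrev Simplex : Type := Finset ℕ
abbrev Cplx : Type := Finset (Finset ℕ)

/-- A simplicial complex: a finite set of nonempty finite sets closed under
taking nonempty subsets. -/
def IsSimpComplex (K : Cplx) : Prop :=
  (∀ τ ∈ K, τ.Nonempty) ∧ ∀ τ ∈ K, ∀ σ : Simplex, σ ⊆ τ → σ.Nonempty → σ ∈ K

/-- A cosimplicial complex: for all σ, τ ∈ S, every ν with σ ⊆ ν ⊆ τ is in S. -/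
def IsCosimplicial (S : Cplx) : Prop :=
  ∀ σ ∈ S, ∀ τ ∈ S, ∀ ν : Simplex, σ ⊆ ν → ν ⊆ τ → ν ∈ S

/-- S is open for K. -/
def IsOpenFor (K S : Cplx) : Prop :=
  S ⊆ K ∧ ∀ σ ∈ S, ∀ τ ∈ K, σ ⊆ τ → τ ∈ S

/-- S is closed for K. -/
def IsClosedFor (K S : Cplx) : Prop :=
  S ⊆ K ∧ IsSimpComplex S

/-- Closure of a finite set of simplexes: all nonempty subsets of members. -/
def cl (S : Cplx) : Cplx :=
  S.biUnion fun τ => τ.powerset.filter fun σ => σ.Nonempty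

/-- (σ, τ) is a free pair for K: τ is the only face of K properly containing σ. -/
def IsFreePair (K : Cplx) (σ τ : Simplex) : Prop :=
  σ ∈ K ∧ τ ∈ K ∧ σ ⊂ τ ∧ ∀ ρ ∈ K, σ ⊂ ρ → ρ = τ

/-- K' is an elementary expansion of K. -/
def ElemExpansion (K' K : Cplx) : Prop :=
  ∃ σ τ : Simplex, σ ∉ K ∧ τ ∉ K ∧ K' = K ∪ {σ, τ} ∧ IsFreePair K' σ τ

/-- K' is an elementary filling of K: K' = K ∪ {ν} with ν a facet of K'. -/
def ElemFilling (K' K : Cplx) : Prop :=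
  ∃ ν : Simplex, ν ∉ K ∧ K' = insert ν K ∧ ∀ ρ ∈ K', ν ⊆ ρ → ρ = ν

/-- A collapses onto B: a sequence of elementary collapses from A to B. -/
def Collapses (A B : Cplx) : Prop :=
  Relation.ReflTransGen (fun X Y : Cplx => ElemExpansion X Y) A B

/-- A Morse sequence from L to K, as W 0, …, W k, consisting of simplicial
complexes, each step an elementary expansion or an elementary filling. -/
def MorseSeq (L K : Cplx) (k : ℕ) (W : ℕ → Cplx) : Prop :=
  W 0 = L ∧ W k = K ∧ (∀ i ≤ k, IsSimpComplex (W i)) ∧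
  ∀ i < k, ElemExpansion (W (i+1)) (W i) ∨ ElemFilling (W (i+1)) (W i)

/-- F is a stack on S: monotone with respect to inclusion. -/
def IsStackOn (S : Cplx) (F : Simplex → ℤ) : Prop :=
  ∀ σ ∈ S, ∀ τ ∈ S, σ ⊆ τ → F σ ≤ F τ

/-- (σ, τ) is a regular pair of the Morse sequence W (of length k). -/
def RegularPair (k : ℕ) (W : ℕ → Cplx) (σ τ : Simplex) : Prop :=
  ∃ i < k, σ ∉ W i ∧ τ ∉ W i ∧ W (i+1) = W i ∪ {σ, τ} ∧ IsFreePair (W (i+1)) σ τ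

/-- An F-sequence: a Morse sequence whose regular pairs satisfy F σ = F τ. -/
def FSeq (F : Simplex → ℤ) (L K : Cplx) (k : ℕ) (W : ℕ → Cplx) : Prop :=
  MorseSeq L K k W ∧ ∀ σ τ : Simplex, RegularPair k W σ τ → F σ = F τ

/-- A flooding sequence: an F-sequence from ∅ to K such that F σ ≤ F τ whenever
σ ∈ K_i and τ ∈ K_j appears strictly later (τ ∉ K_i), with i < j. -/
def Flooding (F : Simplex → ℤ) (K : Cplx) (k : ℕ) (W : ℕ → Cplx) : Prop :=
  FSeq F ∅ K k W ∧
  ∀ i j : ℕ, i < j → j ≤ k → ∀ σ ∈ W i, ∀ τ ∈ W j, τ ∉ W i → F σ ≤ F τ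

/-- Coboundary δ(ν, S) of ν in S. -/
def cob (S : Cplx) (ν : Simplex) : Cplx :=
  S.filter fun μ => ν ⊆ μ ∧ μ.card = ν.card + 1

/-- Boundary ∂(ν, S) of ν in S. -/
def bdry (S : Cplx) (ν : Simplex) : Cplx :=
  S.filter fun η => η ⊆ ν ∧ η.card + 1 = ν.card

section FloodAux

variable (F : Simplex → ℤ) (W : ℕ → Cplx)

/-- The step at which a cell `μ` first appears (as index of the complex before). -/
noncomputable def stepIdx (μ : Simplex) : ℕ := sInf {n | μ ∈ W (n+1)}

/-- The `F`-value of the cells added at step `i`. -/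
noncomputable def stepVal (i : ℕ) : ℤ :=
  if h : ((W (i+1)) \ (W i)).Nonempty then F h.choose else 0

/-- Total preorder on step indices: by value, ties broken by original index. -/
def keyR (a b : ℕ) : Prop :=
  stepVal F W a < stepVal F W b ∨ (stepVal F W a = stepVal F W b ∧ a ≤ b)

/-- Strict version of `keyR`. -/
def keyS (a b : ℕ) : Prop :=
  stepVal F W a < stepVal F W b ∨ (stepVal F W a = stepVal F W b ∧ a < b)

instance : IsTrans ℕ (keyR F W) := ⟨by unfold keyR; intro a b c hab hbc; omega⟩
instance : Std.Antisymm (keyR F W) := ⟨by unfold keyR; intro a b hab hba; omega⟩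
instance : Std.Total (keyR F W) := ⟨by unfold keyR; intro a b; omega⟩
noncomputable instance : DecidableRel (keyR F W) := Classical.decRel _

/-- The original step indices, sorted by `keyR`. -/
noncomputable def sortL (k : ℕ) : List ℕ := Finset.sort (Finset.range k) (keyR F W)

/-- The reordered (flooding) sequence. -/
noncomputable def flood (K : Cplx) (k j : ℕ) : Cplx :=
  K.filter fun μ => (sortL F W k).idxOf (stepIdx W μ) < j

variable {F W}

lemma keyS_irrefl {a : ℕ} (h : keyS F W a a) : False := by unfold keyS at h; omega

lemma keyS_of_keyR_ne {a b : ℕ} (h : keyR F W a b) (hne : a ≠ b) : keyS F W a b := by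
  unfold keyR at h; unfold keyS; omega

lemma keyS_asymm {a b : ℕ} (h : keyS F W a b) (h' : keyR F W b a) : False := by
  unfold keyS at h; unfold keyR at h'; omega

variable {K : Cplx} {k : ℕ}

lemma length_sortL : (sortL F W k).length = k := by
  rw [sortL, Finset.length_sort, Finset.card_range]

lemma mem_sortL {a : ℕ} : a ∈ sortL F W k ↔ a < k := by
  rw [sortL, Finset.mem_sort, Finset.mem_range]

lemma indexOf_sortL_lt {a : ℕ} (ha : a < k) : (sortL F W k).idxOf a < k := by
  have := List.idxOf_lt_length_iff.2 ((mem_sortL (F := F) (W := W) (k := k)).2 ha)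
  rwa [length_sortL] at this

lemma get_indexOf_sortL {a : ℕ} (ha : a < k) :
    (sortL F W k).get ⟨(sortL F W k).idxOf a, by
      rw [length_sortL]; exact indexOf_sortL_lt ha⟩ = a :=
  List.idxOf_get _

lemma indexOf_get_sortL (j : Fin (sortL F W k).length) :
    (sortL F W k).idxOf ((sortL F W k).get j) = j :=
  List.get_idxOf (Finset.sort_nodup _ _) j

lemma sortL_inj {a b : ℕ} (ha : a < k) (hb : b < k)
    (h : (sortL F W k).idxOf a = (sortL F W k).idxOf b) : a = b := by
  have h1 := get_indexOf_sortL (F := F) (W := W) ha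
  have h2 := get_indexOf_sortL (F := F) (W := W) hb
  rw [← h1, ← h2]
  congr 1
  exact Fin.ext h

lemma indexOf_lt_of_keyS {a b : ℕ} (ha : a < k) (hb : b < k) (h : keyS F W a b) :
    (sortL F W k).idxOf a < (sortL F W k).idxOf b := by
  by_contra hc
  push_neg at hc
  rcases eq_or_lt_of_le hc with heq | hlt
  · exact keyS_irrefl (sortL_inj hb ha heq ▸ h)
  · have hs := (Finset.pairwise_sort (Finset.range k) (keyR F W)).rel_get_of_lt
      (a := ⟨(sortL F W k).idxOf b, by
        rw [show sort (Finset.range k) (keyR F W) = sortL F W k from rfl, length_sortL]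
        exact indexOf_sortL_lt hb⟩)
      (b := ⟨(sortL F W k).idxOf a, by
        rw [show sort (Finset.range k) (keyR F W) = sortL F W k from rfl, length_sortL]
        exact indexOf_sortL_lt ha⟩)
      (by exact Fin.mk_lt_mk.2 hlt)
    have hba : keyR F W b a := by
      rw [← get_indexOf_sortL (F := F) (W := W) (k := k) hb,
        ← get_indexOf_sortL (F := F) (W := W) (k := k) ha]
      exact hs
    exact keyS_asymm h hba

lemma keyS_of_indexOf_lt {a b : ℕ} (ha : a < k) (hb : b < k)
    (h : (sortL F W k).idxOf a < (sortL F W k).idxOf b) : keyS F W a b := by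
  rcases eq_or_ne a b with rfl | hne
  · omega
  rcases (Std.Total.total (r := keyR F W) a b) with hr | hr
  · exact keyS_of_keyR_ne hr hne
  · exact absurd (indexOf_lt_of_keyS hb ha (keyS_of_keyR_ne hr (Ne.symm hne))) (by omega)

/-! ### Facts about the original sequence -/

lemma W_mono (hW : FSeq F ∅ K k W) : ∀ i j, i ≤ j → j ≤ k → W i ⊆ W j := by
  intro i j hij hjk
  induction j, hij using Nat.le_induction with
  | base => exact Finset.Subset.refl _
  | succ m hm ih =>
    have hmk : m < k := by omega
    have ih' := ih (by omega)
    rcases hW.1.2.2.2 m hmk with ⟨σ, τ, _, _, hEq, _⟩ | ⟨ν, _, hEq, _⟩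
    · rw [hEq]; exact ih'.trans Finset.subset_union_left
    · rw [hEq]; exact ih'.trans (Finset.subset_insert _ _)

lemma stepIdx_spec (hW : FSeq F ∅ K k W) {μ : Simplex} (hμ : μ ∈ K) :
    stepIdx W μ < k ∧ μ ∈ W (stepIdx W μ + 1) ∧ μ ∉ W (stepIdx W μ) := by
  have h0 : W 0 = ∅ := hW.1.1
  have hk : W k = K := hW.1.2.1
  rcases k with _ | m
  · rw [← hk, h0] at hμ; simp at hμ
  have hmm : m ∈ {n | μ ∈ W (n+1)} := by simpa [Set.mem_setOf_eq, hk] using hμ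
  have hne : {n | μ ∈ W (n+1)}.Nonempty := ⟨m, hmm⟩
  have hmem : μ ∈ W (stepIdx W μ + 1) := Nat.sInf_mem hne
  have hle : stepIdx W μ ≤ m := Nat.sInf_le hmm
  refine ⟨by omega, hmem, ?_⟩
  rcases h : stepIdx W μ with _ | p
  · rw [h0]; simp
  · intro hc
    have := Nat.sInf_le (show p ∈ {n | μ ∈ W (n+1)} from hc)
    rw [stepIdx] at h; omega

lemma mem_W_iff (hW : FSeq F ∅ K k W) {n : ℕ} (hn : n ≤ k) {μ : Simplex} :
    μ ∈ W n ↔ μ ∈ K ∧ stepIdx W μ < n := by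
  constructor
  · intro h
    rcases n with _ | m
    · rw [hW.1.1] at h; simp at h
    have hμK : μ ∈ K := by
      have := W_mono hW (m+1) k (by omega) le_rfl h
      rwa [hW.1.2.1] at this
    have : stepIdx W μ ≤ m := Nat.sInf_le (show m ∈ {n | μ ∈ W (n+1)} from h)
    exact ⟨hμK, by omega⟩
  · rintro ⟨hμK, hlt⟩
    obtain ⟨hk', hmem, -⟩ := stepIdx_spec hW hμK
    exact W_mono hW (stepIdx W μ + 1) n (by omega) hn hmem

lemma newCell_iff (hW : FSeq F ∅ K k W) {i : ℕ} (hi : i < k) {μ : Simplex} :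
    (μ ∈ W (i+1) ∧ μ ∉ W i) ↔ (μ ∈ K ∧ stepIdx W μ = i) := by
  rw [mem_W_iff hW (by omega), mem_W_iff hW (by omega)]
  constructor
  · rintro ⟨⟨h1, h2⟩, h3⟩
    have : ¬ stepIdx W μ < i := fun hlt => h3 ⟨h1, hlt⟩
    exact ⟨h1, by omega⟩
  · rintro ⟨h1, h2⟩
    exact ⟨⟨h1, by omega⟩, fun hc => absurd hc.2 (by omega)⟩

lemma stepVal_eq (hW : FSeq F ∅ K k W) {i : ℕ} (hi : i < k) {μ : Simplex}
    (h1 : μ ∈ W (i+1)) (h2 : μ ∉ W i) : F μ = stepVal F W i := by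
  have hne : ((W (i+1)) \ (W i)).Nonempty := ⟨μ, Finset.mem_sdiff.2 ⟨h1, h2⟩⟩
  rw [stepVal, dif_pos hne]
  have hcmem := hne.choose_spec
  rw [Finset.mem_sdiff] at hcmem
  rcases hW.1.2.2.2 i hi with ⟨σ, τ, hσ, hτ, hEq, hfp⟩ | ⟨ν, hν, hEq, _⟩
  · have hFστ : F σ = F τ := hW.2 σ τ ⟨i, hi, hσ, hτ, hEq, hfp⟩
    have key : ∀ x : Simplex, x ∈ W (i+1) → x ∉ W i → F x = F σ := by
      intro x hx1 hx2
      rw [hEq, Finset.mem_union] at hx1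
      rcases hx1 with hx1 | hx1
      · exact absurd hx1 hx2
      · rcases Finset.mem_insert.1 hx1 with rfl | hx1
        · rfl
        · rw [Finset.mem_singleton] at hx1; rw [hx1, hFστ]
    rw [key μ h1 h2, key _ hcmem.1 hcmem.2]
  · have key : ∀ x : Simplex, x ∈ W (i+1) → x ∉ W i → x = ν := by
      intro x hx1 hx2
      rw [hEq] at hx1
      rcases Finset.mem_insert.1 hx1 with rfl | hx1
      · rfl
      · exact absurd hx1 hx2
    rw [key μ h1 h2, key _ hcmem.1 hcmem.2]

/-! ### Pair matching lemmas -/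

lemma fill_not_pair {A : Cplx} {ν σ τ : Simplex} (h1 : insert ν A = A ∪ {σ, τ})
    (hσ : σ ∉ A) (hτ : τ ∉ A) (hst : σ ⊂ τ) : False := by
  have hσm : σ ∈ insert ν A := by rw [h1]; simp
  have hτm : τ ∈ insert ν A := by rw [h1]; simp
  have hσν : σ = ν := by
    rcases Finset.mem_insert.1 hσm with h | h
    · exact h
    · exact absurd h hσ
  have hτν : τ = ν := by
    rcases Finset.mem_insert.1 hτm with h | h
    · exact h
    · exact absurd h hτ
  exact (Finset.ssubset_iff_subset_ne.1 hst).2 (by rw [hσν, hτν])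

lemma pair_match {A : Cplx} {σ τ σ' τ' : Simplex} (h : A ∪ {σ, τ} = A ∪ {σ', τ'})
    (hσ : σ ∉ A) (hτ : τ ∉ A) (hσ' : σ' ∉ A) (_hτ' : τ' ∉ A)
    (hst : σ ⊂ τ) (hst' : σ' ⊂ τ') : σ = σ' ∧ τ = τ' := by
  have mem : ∀ x : Simplex, x ∉ A → x ∈ A ∪ ({σ, τ} : Cplx) → x = σ' ∨ x = τ' := by
    intro x hx hmem
    rw [h, Finset.mem_union] at hmem
    rcases hmem with h' | h'
    · exact absurd h' hx
    · simpa using h'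
  have mem' : ∀ x : Simplex, x ∉ A → x ∈ A ∪ ({σ', τ'} : Cplx) → x = σ ∨ x = τ := by
    intro x hx hmem
    rw [← h, Finset.mem_union] at hmem
    rcases hmem with h' | h'
    · exact absurd h' hx
    · simpa using h'
  have hσmem := mem σ hσ (by simp)
  have hτmem := mem τ hτ (by simp)
  have hσ'mem := mem' σ' hσ' (by simp)
  have hne : σ ≠ τ := (Finset.ssubset_iff_subset_ne.1 hst).2
  have hne' : σ' ≠ τ' := (Finset.ssubset_iff_subset_ne.1 hst').2
  rcases hσmem with h1 | h1
  · refine ⟨h1, ?_⟩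
    rcases hτmem with h2 | h2
    · exact absurd (h1.trans h2.symm) hne
    · exact h2
  · -- σ = τ'
    rcases hσ'mem with h2 | h2
    · exact absurd (h2.trans h1) hne'
    · -- σ' = τ : σ' ⊂ τ' = σ ⊂ τ = σ'
      exfalso
      have : σ' ⊂ σ' := by
        calc σ' ⊂ τ' := hst'
        _ = σ := h1.symm
        _ ⊂ τ := hst
        _ = σ' := h2.symm
      exact (Finset.ssubset_iff_subset_ne.1 this).2 rfl

end FloodAux
theorem exists_equivalent_flooding_sequence (K : Cplx) (F : Simplex → ℤ)
    (k : ℕ) (W : ℕ → Cplx)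
    (hK : IsSimpComplex K) (hF : IsStackOn K F) (hW : FSeq F ∅ K k W) :
    ∃ (k' : ℕ) (W' : ℕ → Cplx), Flooding F K k' W' ∧
      ∀ σ τ : Simplex, (RegularPair k W σ τ ↔ RegularPair k' W' σ τ) := by
  classical
  have hk : W k = K := hW.1.2.1
  have hsc := hW.1.2.2.1
  have hstep := hW.1.2.2.2
  have hspec : ∀ μ ∈ K, stepIdx W μ < k ∧ μ ∈ W (stepIdx W μ + 1) ∧ μ ∉ W (stepIdx W μ) :=
    fun μ h => stepIdx_spec hW h
  have memW' : ∀ j (μ : Simplex), μ ∈ flood F W K k j ↔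
      μ ∈ K ∧ (sortL F W k).idxOf (stepIdx W μ) < j := by
    intro j μ; rw [flood, Finset.mem_filter]
  have hsubK : ∀ {n}, n ≤ k → W n ⊆ K := by
    intro n hn; rw [← hk]; exact W_mono hW n k hn le_rfl
  -- the master step lemma
  have main : ∀ i, i < k → ∀ j, (sortL F W k).idxOf i = j →
      (∀ σ τ : Simplex, σ ∉ W i → τ ∉ W i → W (i+1) = W i ∪ {σ, τ} →
        IsFreePair (W (i+1)) σ τ →
        σ ∉ flood F W K k j ∧ τ ∉ flood F W K k j ∧
          flood F W K k (j+1) = flood F W K k j ∪ {σ, τ} ∧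
          IsFreePair (flood F W K k (j+1)) σ τ) ∧
      (∀ ν : Simplex, ν ∉ W i → W (i+1) = insert ν (W i) →
        (∀ ρ ∈ W (i+1), ν ⊆ ρ → ρ = ν) →
        ν ∉ flood F W K k j ∧ flood F W K k (j+1) = insert ν (flood F W K k j) ∧
          ∀ ρ ∈ flood F W K k (j+1), ν ⊆ ρ → ρ = ν) := by
    intro i hik j hj
    have hjk : j < k := hj ▸ indexOf_sortL_lt hik
    have hnotV : ∀ μ ∈ K, stepIdx W μ = i → μ ∉ flood F W K k j := by
      intro μ hμK hμi hc
      obtain ⟨-, hlt⟩ := (memW' j μ).1 hc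
      rw [hμi, hj] at hlt
      omega
    have hA : flood F W K k (j+1) = flood F W K k j ∪ (W (i+1) \ W i) := by
      ext μ
      rw [memW', Finset.mem_union, memW', Finset.mem_sdiff]
      constructor
      · rintro ⟨hμK, hlt⟩
        rcases Nat.lt_or_ge ((sortL F W k).idxOf (stepIdx W μ)) j with h | h
        · exact Or.inl ⟨hμK, h⟩
        · have heq : (sortL F W k).idxOf (stepIdx W μ) = (sortL F W k).idxOf i := by
            omega
          have : stepIdx W μ = i := sortL_inj (hspec μ hμK).1 hik heq
          exact Or.inr ((newCell_iff hW hik).2 ⟨hμK, this⟩)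
      · rintro (⟨hμK, hlt⟩ | hnc)
        · exact ⟨hμK, by omega⟩
        · obtain ⟨hμK, hμi⟩ := (newCell_iff hW hik).1 hnc
          exact ⟨hμK, by rw [hμi, hj]; omega⟩
    have hVfut : ∀ ρ ∈ flood F W K k j, ρ ∈ K ∧ keyS F W (stepIdx W ρ) i := by
      intro ρ hρ
      obtain ⟨hρK, hlt⟩ := (memW' j ρ).1 hρ
      exact ⟨hρK, keyS_of_indexOf_lt (hspec ρ hρK).1 hik (by omega)⟩
    constructor
    · intro σ τ hσ hτ hEq hfp
      have hσW : σ ∈ W (i+1) := by rw [hEq]; simp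
      have hτW : τ ∈ W (i+1) := by rw [hEq]; simp
      have hσK : σ ∈ K := hsubK (by omega) hσW
      have hτK : τ ∈ K := hsubK (by omega) hτW
      have hst : σ ⊂ τ := hfp.2.2.1
      have hIσ : stepIdx W σ = i := ((newCell_iff hW hik).1 ⟨hσW, hσ⟩).2
      have hIτ : stepIdx W τ = i := ((newCell_iff hW hik).1 ⟨hτW, hτ⟩).2
      have hNew : W (i+1) \ W i = {σ, τ} := by
        ext x
        rw [Finset.mem_sdiff, hEq, Finset.mem_union]
        constructor
        · rintro ⟨h1 | h1, h2⟩
          · exact absurd h1 h2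
          · exact h1
        · intro hx
          refine ⟨Or.inr hx, ?_⟩
          rcases Finset.mem_insert.1 hx with rfl | hx'
          · exact hσ
          · rw [Finset.mem_singleton] at hx'; rw [hx']; exact hτ
      have hV1 : flood F W K k (j+1) = flood F W K k j ∪ {σ, τ} := by rw [hA, hNew]
      refine ⟨hnotV σ hσK hIσ, hnotV τ hτK hIτ, hV1, ?_, ?_, hst, ?_⟩
      · rw [hV1]; simp
      · rw [hV1]; simp
      · intro ρ hρ hsub
        rw [hV1, Finset.mem_union] at hρ
        rcases hρ with hρ | hρ
        · obtain ⟨hρK, hkeyS⟩ := hVfut ρ hρ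
          have e1 : F ρ = stepVal F W (stepIdx W ρ) :=
            stepVal_eq hW (hspec ρ hρK).1 (hspec ρ hρK).2.1 (hspec ρ hρK).2.2
          have e2 : F σ = stepVal F W i := stepVal_eq hW hik hσW hσ
          have hle : F σ ≤ F ρ := hF σ hσK ρ hρK hsub.subset
          rcases hkeyS with hlt | ⟨-, hlt⟩
          · rw [← e1, ← e2] at hlt; omega
          · have hρW : ρ ∈ W (i+1) :=
              W_mono hW (stepIdx W ρ + 1) (i+1) (by omega) (by omega) (hspec ρ hρK).2.1
            exact hfp.2.2.2 ρ hρW hsub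
        · rcases Finset.mem_insert.1 hρ with rfl | hρ'
          · exact absurd rfl (Finset.ssubset_iff_subset_ne.1 hsub).2.symm
          · exact Finset.mem_singleton.1 hρ'
    · intro ν hν hEq hfacet
      have hνW : ν ∈ W (i+1) := by rw [hEq]; simp
      have hνK : ν ∈ K := hsubK (by omega) hνW
      have hIν : stepIdx W ν = i := ((newCell_iff hW hik).1 ⟨hνW, hν⟩).2
      have hNew : W (i+1) \ W i = {ν} := by
        ext x
        rw [Finset.mem_sdiff, hEq]
        constructor
        · rintro ⟨h1, h2⟩
          rcases Finset.mem_insert.1 h1 with rfl | h1'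
          · exact Finset.mem_singleton.2 rfl
          · exact absurd h1' h2
        · intro hx
          rw [Finset.mem_singleton] at hx
          subst hx
          exact ⟨Finset.mem_insert_self _ _, hν⟩
      have hV1 : flood F W K k (j+1) = insert ν (flood F W K k j) := by
        rw [hA, hNew, Finset.union_comm]
        ext x; simp
      refine ⟨hnotV ν hνK hIν, hV1, ?_⟩
      intro ρ hρ hsub
      rw [hV1] at hρ
      rcases Finset.mem_insert.1 hρ with rfl | hρ'
      · rfl
      · obtain ⟨hρK, hkeyS⟩ := hVfut ρ hρ'
        have e1 : F ρ = stepVal F W (stepIdx W ρ) :=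
          stepVal_eq hW (hspec ρ hρK).1 (hspec ρ hρK).2.1 (hspec ρ hρK).2.2
        have e2 : F ν = stepVal F W i := stepVal_eq hW hik hνW hν
        have hle : F ν ≤ F ρ := hF ν hνK ρ hρK hsub
        rcases hkeyS with hlt | ⟨-, hlt⟩
        · rw [← e1, ← e2] at hlt; omega
        · have hρW : ρ ∈ W (i+1) :=
            W_mono hW (stepIdx W ρ + 1) (i+1) (by omega) (by omega) (hspec ρ hρK).2.1
          exact hfacet ρ hρW hsub
  -- endpoints
  have hV0 : flood F W K k 0 = ∅ := by
    ext μ; rw [memW']; simp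
  have hVk : flood F W K k k = K := by
    ext μ
    rw [memW']
    exact ⟨And.left, fun h => ⟨h, indexOf_sortL_lt (hspec μ h).1⟩⟩
  -- simplicial complexes
  have hVsc : ∀ j ≤ k, IsSimpComplex (flood F W K k j) := by
    intro j hj
    constructor
    · intro μ hμ
      exact hK.1 μ ((memW' j μ).1 hμ).1
    · intro μ hμ ρ hρsub hρne
      obtain ⟨hμK, hidx⟩ := (memW' j μ).1 hμ
      have hρK : ρ ∈ K := hK.2 μ hμK ρ hρsub hρne
      rw [memW']
      refine ⟨hρK, ?_⟩
      rcases eq_or_ne (stepIdx W ρ) (stepIdx W μ) with he | hne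
      · rw [he]; omega
      · have h1 : F ρ ≤ F μ := hF ρ hρK μ hμK hρsub
        have h2 : stepIdx W ρ ≤ stepIdx W μ := by
          have hρmem : ρ ∈ W (stepIdx W μ + 1) :=
            (hsc (stepIdx W μ + 1) (by have := (hspec μ hμK).1; omega)).2 μ (hspec μ hμK).2.1 ρ hρsub hρne
          exact Nat.sInf_le hρmem
        have hkeyS : keyS F W (stepIdx W ρ) (stepIdx W μ) := by
          have e1 : F ρ = stepVal F W (stepIdx W ρ) :=
            stepVal_eq hW (hspec ρ hρK).1 (hspec ρ hρK).2.1 (hspec ρ hρK).2.2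
          have e2 : F μ = stepVal F W (stepIdx W μ) :=
            stepVal_eq hW (hspec μ hμK).1 (hspec μ hμK).2.1 (hspec μ hμK).2.2
          unfold keyS
          rw [← e1, ← e2]
          rcases lt_or_eq_of_le h1 with h | h
          · exact Or.inl h
          · exact Or.inr ⟨h, lt_of_le_of_ne h2 hne⟩
        have := indexOf_lt_of_keyS (hspec ρ hρK).1 (hspec μ hμK).1 hkeyS
        omega
  -- steps
  have hVstep : ∀ j < k, ElemExpansion (flood F W K k (j+1)) (flood F W K k j) ∨
      ElemFilling (flood F W K k (j+1)) (flood F W K k j) := by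
    intro j hjk
    have hjlen : j < (sortL F W k).length := by rw [length_sortL]; exact hjk
    set i := (sortL F W k).get ⟨j, hjlen⟩ with hidef
    have hik : i < k := mem_sortL.1 (List.get_mem _ _)
    have hj : (sortL F W k).idxOf i = j := indexOf_get_sortL ⟨j, hjlen⟩
    obtain ⟨mainE, mainF⟩ := main i hik j hj
    rcases hstep i hik with ⟨σ, τ, hσ, hτ, hEq, hfp⟩ | ⟨ν, hν, hEq, hfacet⟩
    · obtain ⟨h1, h2, h3, h4⟩ := mainE σ τ hσ hτ hEq hfp
      exact Or.inl ⟨σ, τ, h1, h2, h3, h4⟩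
    · obtain ⟨h1, h2, h3⟩ := mainF ν hν hEq hfacet
      exact Or.inr ⟨ν, h1, h2, h3⟩
  -- regular pair transfer
  have hregWV : ∀ σ τ : Simplex, RegularPair k W σ τ → RegularPair k (flood F W K k) σ τ := by
    rintro σ τ ⟨i, hik, hσ, hτ, hEq, hfp⟩
    obtain ⟨mainE, -⟩ := main i hik ((sortL F W k).idxOf i) rfl
    obtain ⟨h1, h2, h3, h4⟩ := mainE σ τ hσ hτ hEq hfp
    exact ⟨(sortL F W k).idxOf i, indexOf_sortL_lt hik, h1, h2, h3, h4⟩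
  have hregVW : ∀ σ τ : Simplex, RegularPair k (flood F W K k) σ τ → RegularPair k W σ τ := by
    rintro σ τ ⟨j, hjk, hσ, hτ, hEq, hfp⟩
    have hjlen : j < (sortL F W k).length := by rw [length_sortL]; exact hjk
    set i := (sortL F W k).get ⟨j, hjlen⟩ with hidef
    have hik : i < k := mem_sortL.1 (List.get_mem _ _)
    have hj : (sortL F W k).idxOf i = j := indexOf_get_sortL ⟨j, hjlen⟩
    obtain ⟨mainE, mainF⟩ := main i hik j hj
    rcases hstep i hik with ⟨σ₀, τ₀, hσ₀, hτ₀, hEq₀, hfp₀⟩ | ⟨ν, hν, hEq₀, hfacet⟩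
    · obtain ⟨h1, h2, h3, h4⟩ := mainE σ₀ τ₀ hσ₀ hτ₀ hEq₀ hfp₀
      obtain ⟨e1, e2⟩ := pair_match (hEq.symm.trans h3) hσ hτ h1 h2 hfp.2.2.1 h4.2.2.1
      subst e1; subst e2
      exact ⟨i, hik, hσ₀, hτ₀, hEq₀, hfp₀⟩
    · obtain ⟨h1, h2, -⟩ := mainF ν hν hEq₀ hfacet
      exact absurd (h2.symm.trans hEq) (fun h => fill_not_pair h hσ hτ hfp.2.2.1)
  -- flooding inequality
  have hflood : ∀ a b : ℕ, a < b → b ≤ k → ∀ σ ∈ flood F W K k a, ∀ τ ∈ flood F W K k b,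
      τ ∉ flood F W K k a → F σ ≤ F τ := by
    intro a b hab hbk σ hσ τ hτ hτn
    obtain ⟨hσK, hσi⟩ := (memW' a σ).1 hσ
    obtain ⟨hτK, hτi⟩ := (memW' b τ).1 hτ
    have hτn' : ¬ (sortL F W k).idxOf (stepIdx W τ) < a := fun hc => hτn ((memW' a τ).2 ⟨hτK, hc⟩)
    have hkeyS := keyS_of_indexOf_lt (F := F) (W := W) (hspec σ hσK).1 (hspec τ hτK).1 (by omega)
    have e1 : F σ = stepVal F W (stepIdx W σ) :=
      stepVal_eq hW (hspec σ hσK).1 (hspec σ hσK).2.1 (hspec σ hσK).2.2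
    have e2 : F τ = stepVal F W (stepIdx W τ) :=
      stepVal_eq hW (hspec τ hτK).1 (hspec τ hτK).2.1 (hspec τ hτK).2.2
    unfold keyS at hkeyS
    rw [← e1, ← e2] at hkeyS
    omega
  exact ⟨k, flood F W K k,
    ⟨⟨⟨hV0, hVk, hVsc, hVstep⟩, fun σ τ h => hW.2 σ τ (hregVW σ τ h)⟩, hflood⟩,
    fun σ τ => ⟨hregWV σ τ, hregVW σ τ⟩⟩
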